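/- Let 0 < α ≤ β ≤ 1 and let {X_{k,l}, k,l ≥ 0} be i.i.d. real random variables with X a generic copy. If n P(|X| > n) → 0 as n → ∞ and E X = μ exists and is finite, then (1/(A_m^α A_n^β)) Σ_{k=0}^m Σ_{l=0}^n A_{m-k}^{α-1} A_{n-l}^{β-1} X_{k,l} → μ in probability as m, n → ∞ (i.e., as min(m,n) → ∞). -/

import Mathlib

open MeasureTheory ProbabilityTheory Filter Finset Topology

/-- `cesaroA α n` is the Cesàro coefficient `A_n^α = (α+1)(α+2)⋯(α+n)/n!`
(with `A_0^α = 1`). Note that this also gives `A_n^{-1} = 0` for `n ≥ 1`. -/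
noncomputable def cesaroA (α : ℝ) (n : ℕ) : ℝ :=
  ∏ j ∈ Finset.range n, (α + (j + 1)) / (j + 1)


lemma cesaroA_succ (γ : ℝ) (n : ℕ) :
    cesaroA γ (n + 1) = cesaroA γ n * ((γ + (n + 1)) / (n + 1)) :=
  Finset.prod_range_succ _ n

lemma cesaroA_pos {γ : ℝ} (h : -1 < γ) (n : ℕ) : 0 < cesaroA γ n := by
  apply Finset.prod_pos
  intro j _
  have : (0:ℝ) ≤ j := Nat.cast_nonneg j
  apply div_pos (by linarith) (by positivity)

lemma cesaroA_le_one {γ : ℝ} (h1 : -1 ≤ γ) (h2 : γ ≤ 0) (n : ℕ) : cesaroA γ n ≤ 1 := by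
  apply Finset.prod_le_one
  · intro j _
    have : (0:ℝ) ≤ j := Nat.cast_nonneg j
    apply div_nonneg (by linarith) (by positivity)
  · intro j _
    have h : (0:ℝ) < (j:ℝ) + 1 := by positivity
    rw [div_le_one h]
    linarith

lemma cesaroA_ratio (γ : ℝ) (n : ℕ) :
    (γ + 1) * cesaroA (γ + 1) n = (γ + n + 1) * cesaroA γ n := by
  induction n with
  | zero => simp [cesaroA]
  | succ n ih =>
    rw [cesaroA_succ, cesaroA_succ, ← mul_assoc, ih]
    have hn : ((n:ℝ) + 1) ≠ 0 := by positivity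
    push_cast
    field_simp
    ring

lemma cesaroA_succ_add {γ : ℝ} (hγ : γ + 1 ≠ 0) (n : ℕ) :
    cesaroA (γ + 1) (n + 1) = cesaroA (γ + 1) n + cesaroA γ (n + 1) := by
  have hn : ((n:ℝ) + 1) ≠ 0 := by positivity
  have key : (γ + 1) * cesaroA (γ + 1) (n + 1) =
      (γ + 1) * (cesaroA (γ + 1) n + cesaroA γ (n + 1)) := by
    rw [cesaroA_ratio, mul_add, cesaroA_ratio, cesaroA_succ]
    push_cast
    field_simp
    ring
  exact mul_left_cancel₀ hγ key

lemma cesaroA_sum {γ : ℝ} (hγ : γ + 1 ≠ 0) (m : ℕ) :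
    ∑ j ∈ Finset.range (m + 1), cesaroA γ j = cesaroA (γ + 1) m := by
  induction m with
  | zero => simp [cesaroA]
  | succ m ih => rw [Finset.sum_range_succ, ih, ← cesaroA_succ_add hγ]

lemma one_add_mul_le_cesaroA {a : ℝ} (ha : 0 ≤ a) (n : ℕ) :
    1 + a * ∑ j ∈ Finset.range n, (1:ℝ) / (j + 1) ≤ cesaroA a n := by
  induction n with
  | zero => simp [cesaroA]
  | succ n ih =>
    have hH : 0 ≤ ∑ j ∈ Finset.range n, (1:ℝ) / (j + 1) :=
      Finset.sum_nonneg fun j _ => by positivity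
    have hn : (0:ℝ) < (n:ℝ) + 1 := by positivity
    rw [Finset.sum_range_succ, cesaroA_succ]
    have hfac : (a + ((n:ℝ) + 1)) / ((n:ℝ) + 1) = 1 + a / ((n:ℝ) + 1) := by
      field_simp
      ring
    rw [hfac]
    have ht : 0 ≤ a / ((n:ℝ) + 1) := by positivity
    have step := mul_le_mul_of_nonneg_right ih (by linarith : (0:ℝ) ≤ 1 + a / ((n:ℝ) + 1))
    have expand : 1 + a * (∑ j ∈ Finset.range n, (1:ℝ) / (j + 1) + 1 / ((n:ℝ) + 1)) ≤
        (1 + a * ∑ j ∈ Finset.range n, (1:ℝ) / (j + 1)) * (1 + a / ((n:ℝ) + 1)) := by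
      have h2 : 0 ≤ (a * ∑ j ∈ Finset.range n, (1:ℝ) / (j + 1)) * (a / ((n:ℝ) + 1)) :=
        mul_nonneg (mul_nonneg ha hH) ht
      have h3 : a * (1 / ((n:ℝ) + 1)) = a / ((n:ℝ) + 1) := by ring
      nlinarith [h2, h3]
    linarith

lemma cesaroA_tendsto_atTop {a : ℝ} (ha : 0 < a) :
    Tendsto (fun n => cesaroA a n) atTop atTop := by
  apply tendsto_atTop_mono (one_add_mul_le_cesaroA ha.le)
  apply tendsto_atTop_add_const_left
  exact Tendsto.const_mul_atTop ha Real.tendsto_sum_range_one_div_nat_succ_atTop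

noncomputable def trunc (M t : ℝ) : ℝ := if |t| ≤ M then t else 0

lemma trunc_measurable (M : ℝ) : Measurable (trunc M) := by
  unfold trunc
  exact Measurable.ite (measurableSet_le measurable_id.abs measurable_const)
    measurable_id measurable_const

lemma abs_trunc_le {M : ℝ} (hM : 0 ≤ M) (t : ℝ) : |trunc M t| ≤ M := by
  unfold trunc; split_ifs with h
  · exact h
  · simpa using hM

lemma sub_trunc_eq_zero {M t : ℝ} (h : |t| ≤ M) : t - trunc M t = 0 := by
  unfold trunc; rw [if_pos h, sub_self]

lemma weighted_bound
    {Ω : Type*} [MeasureSpace Ω] [IsProbabilityMeasure (ℙ : Measure Ω)]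
    {ι : Type*} (s : Finset ι) (w : ι → ℝ) (X : ι → Ω → ℝ) (X0 : Ω → ℝ) (μ : ℝ)
    (hmeas : ∀ i, Measurable (X i)) (hmeas0 : Measurable X0)
    (hindep : Set.Pairwise ↑s fun i j => IndepFun (X i) (X j) ℙ)
    (hident : ∀ i, IdentDistrib (X i) X0 ℙ ℙ)
    (hint : Integrable X0 ℙ)
    (hw0 : ∀ i ∈ s, 0 ≤ w i) (hw1 : ∑ i ∈ s, w i = 1)
    {c : ℝ} (hc0 : 0 ≤ c) (hwc : ∀ i ∈ s, w i ≤ c)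
    {M ε : ℝ} (hM : 0 < M) (hε : 0 < ε)
    (hclose : |(∫ ω, trunc M (X0 ω) ∂ℙ) - μ| ≤ ε / 3) :
    ℙ {ω | ε ≤ |(∑ i ∈ s, w i * X i ω) - μ|} ≤
      ENNReal.ofReal (3 / ε * ∫ ω, |X0 ω - trunc M (X0 ω)| ∂ℙ) +
      ENNReal.ofReal (9 * M ^ 2 * c / ε ^ 2) := by
  classical
  set μM := ∫ ω, trunc M (X0 ω) ∂ℙ with hμM
  set τ := ∫ ω, |X0 ω - trunc M (X0 ω)| ∂ℙ with hτdef
  have htm : Measurable (trunc M) := trunc_measurable M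
  have hψm : Measurable fun t : ℝ => |t - trunc M t| := (measurable_id.sub htm).abs
  have hXint : ∀ i, Integrable (X i) ℙ := fun i => (hident i).symm.integrable_snd hint
  have hYmem : ∀ i, MemLp (fun ω => trunc M (X i ω)) 2 ℙ := fun i =>
    MemLp.of_bound ((htm.comp (hmeas i)).aestronglyMeasurable) M
      (Filter.Eventually.of_forall fun ω => by
        simpa [Real.norm_eq_abs] using abs_trunc_le hM.le (X i ω))
  have hY0mem : MemLp (fun ω => trunc M (X0 ω)) 2 ℙ :=
    MemLp.of_bound ((htm.comp hmeas0).aestronglyMeasurable) M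
      (Filter.Eventually.of_forall fun ω => by
        simpa [Real.norm_eq_abs] using abs_trunc_le hM.le (X0 ω))
  -- the truncated weighted sum
  set Yf : ι → Ω → ℝ := fun i => w i • (fun ω => trunc M (X i ω)) with hYf
  set T : Ω → ℝ := ∑ i ∈ s, Yf i with hTdef
  have hYfmem : ∀ i ∈ s, MemLp (Yf i) 2 ℙ := fun i _ => (hYmem i).const_smul (w i)
  have hTmem : MemLp T 2 ℙ := memLp_finset_sum' s hYfmem
  have hTapp : ∀ ω, T ω = ∑ i ∈ s, w i * trunc M (X i ω) := by
    intro ω; rw [hTdef]; simp [hYf, Finset.sum_apply]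
  -- expectation of T
  have hETi : ∀ i, ∫ ω, trunc M (X i ω) ∂ℙ = μM :=
    fun i => ((hident i).comp htm).integral_eq
  have hET : ∫ ω, T ω ∂ℙ = μM := by
    rw [hTdef]
    rw [show (∫ ω, (∑ i ∈ s, Yf i) ω ∂ℙ) = ∫ ω, ∑ i ∈ s, Yf i ω ∂ℙ by
      simp [Finset.sum_apply]]
    rw [integral_finset_sum s fun i hi => ((hYfmem i hi).integrable one_le_two)]
    have hterm : ∀ i ∈ s, ∫ ω, Yf i ω ∂ℙ = w i * μM := by
      intro i _
      simp only [hYf, Pi.smul_apply, smul_eq_mul]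
      rw [integral_const_mul, hETi i]
    rw [Finset.sum_congr rfl hterm, ← Finset.sum_mul, hw1, one_mul]
  -- variance bound
  have hV0 : variance (fun ω => trunc M (X0 ω)) ℙ ≤ M ^ 2 := by
    refine (variance_le_expectation_sq hY0mem.aestronglyMeasurable).trans ?_
    have h1 : ∫ ω, ((fun ω => trunc M (X0 ω)) ^ 2) ω ∂ℙ ≤ ∫ _ω : Ω, M ^ 2 ∂ℙ := by
      apply integral_mono hY0mem.integrable_sq (integrable_const _)
      intro ω
      simp only [Pi.pow_apply]
      have h2 := abs_le.mp (abs_trunc_le hM.le (X0 ω))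
      nlinarith [h2.1, h2.2]
    simpa using h1
  have hVT : variance T ℙ ≤ c * M ^ 2 := by
    rw [hTdef, IndepFun.variance_sum hYfmem
      (fun i hi j hj hij => (hindep hi hj hij).comp (htm.const_smul (w i))
        (htm.const_smul (w j)))]
    have hterm : ∀ i ∈ s, variance (Yf i) ℙ ≤ w i * (c * M ^ 2) := by
      intro i hi
      have h1 : variance (Yf i) ℙ =
          w i ^ 2 * variance (fun ω => trunc M (X i ω)) ℙ := variance_smul (w i) _ ℙ
      have h2 : variance (fun ω => trunc M (X i ω)) ℙ =
          variance (fun ω => trunc M (X0 ω)) ℙ := ((hident i).comp htm).variance_eq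
      have hvnn : 0 ≤ variance (fun ω => trunc M (X0 ω)) ℙ := variance_nonneg _ _
      have hwi := hw0 i hi
      have hwci := hwc i hi
      have key : w i * variance (fun ω => trunc M (X0 ω)) ℙ ≤ c * M ^ 2 :=
        mul_le_mul hwci hV0 hvnn hc0
      calc variance (Yf i) ℙ = w i * (w i * variance (fun ω => trunc M (X0 ω)) ℙ) := by
            rw [h1, h2]; ring
        _ ≤ w i * (c * M ^ 2) := mul_le_mul_of_nonneg_left key hwi
    calc ∑ i ∈ s, variance (Yf i) ℙ ≤ ∑ i ∈ s, w i * (c * M ^ 2) :=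
          Finset.sum_le_sum hterm
      _ = c * M ^ 2 := by rw [← Finset.sum_mul, hw1, one_mul]
  -- Chebyshev for T
  have hcheb : ℙ {ω | ε / 3 ≤ |T ω - μM|} ≤ ENNReal.ofReal (9 * M ^ 2 * c / ε ^ 2) := by
    have h := meas_ge_le_variance_div_sq (μ := ℙ) hTmem (show 0 < ε / 3 by positivity)
    rw [hET] at h
    refine h.trans (ENNReal.ofReal_le_ofReal ?_)
    rw [div_le_div_iff₀ (by positivity) (by positivity)]
    nlinarith [mul_le_mul_of_nonneg_right hVT (sq_nonneg ε)]
  -- Markov for the tails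
  set g : Ω → ℝ := fun ω => ∑ i ∈ s, w i * |X i ω - trunc M (X i ω)| with hg
  have hZint : ∀ i, Integrable (fun ω => |X i ω - trunc M (X i ω)|) ℙ := fun i =>
    ((hXint i).sub ((hYmem i).integrable one_le_two)).abs
  have hgint : Integrable g ℙ := integrable_finset_sum s fun i _ => (hZint i).const_mul (w i)
  have hgnn : 0 ≤ᵐ[ℙ] g := Filter.Eventually.of_forall fun ω =>
    Finset.sum_nonneg fun i hi => mul_nonneg (hw0 i hi) (abs_nonneg _)
  have hEg : ∫ ω, g ω ∂ℙ = τ := by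
    rw [show (∫ ω, g ω ∂ℙ) = ∑ i ∈ s, ∫ ω, w i * |X i ω - trunc M (X i ω)| ∂ℙ from
      integral_finset_sum s fun i _ => (hZint i).const_mul (w i)]
    have hterm : ∀ i ∈ s, ∫ ω, w i * |X i ω - trunc M (X i ω)| ∂ℙ = w i * τ := by
      intro i _
      rw [integral_const_mul]
      congr 1
      exact ((hident i).comp hψm).integral_eq
    rw [Finset.sum_congr rfl hterm, ← Finset.sum_mul, hw1, one_mul]
  have hmark : ℙ {ω | ε / 3 ≤ g ω} ≤ ENNReal.ofReal (3 / ε * τ) := by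
    have h := mul_meas_ge_le_integral_of_nonneg hgnn hgint (ε / 3)
    rw [hEg, measureReal_def] at h
    have h2 : (ℙ {ω | ε / 3 ≤ g ω}).toReal ≤ 3 / ε * τ := by
      have h3 : 3 / ε * (ε / 3 * (ℙ {ω | ε / 3 ≤ g ω}).toReal)
          = (ℙ {ω | ε / 3 ≤ g ω}).toReal := by field_simp
      nlinarith [mul_le_mul_of_nonneg_left h (by positivity : (0:ℝ) ≤ 3 / ε)]
    calc ℙ {ω | ε / 3 ≤ g ω}
        = ENNReal.ofReal ((ℙ {ω | ε / 3 ≤ g ω}).toReal) :=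
          (ENNReal.ofReal_toReal (measure_ne_top _ _)).symm
      _ ≤ ENNReal.ofReal (3 / ε * τ) := ENNReal.ofReal_le_ofReal h2
  -- decomposition
  have hsub : {ω | ε ≤ |(∑ i ∈ s, w i * X i ω) - μ|} ⊆
      {ω | ε / 3 ≤ g ω} ∪ {ω | ε / 3 ≤ |T ω - μM|} := by
    intro ω hω
    simp only [Set.mem_setOf_eq] at hω
    by_contra hcon
    simp only [Set.mem_union, Set.mem_setOf_eq, not_or, not_le] at hcon
    obtain ⟨h1, h2⟩ := hcon
    have hdecomp : (∑ i ∈ s, w i * X i ω) - μ =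
        (∑ i ∈ s, w i * (X i ω - trunc M (X i ω))) + (T ω - μM) + (μM - μ) := by
      rw [hTapp ω,
        show ∑ i ∈ s, w i * (X i ω - trunc M (X i ω)) =
          ∑ i ∈ s, w i * X i ω - ∑ i ∈ s, w i * trunc M (X i ω) from by
            rw [← Finset.sum_sub_distrib]
            exact Finset.sum_congr rfl fun i _ => by ring]
      ring
    have habs1 : |∑ i ∈ s, w i * (X i ω - trunc M (X i ω))| ≤ g ω := by
      refine (Finset.abs_sum_le_sum_abs _ _).trans ?_
      apply Finset.sum_le_sum
      intro i hi
      rw [abs_mul, abs_of_nonneg (hw0 i hi)]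
    have hfin : ε ≤ g ω + |T ω - μM| + ε / 3 := by
      calc ε ≤ |(∑ i ∈ s, w i * X i ω) - μ| := hω
        _ ≤ |∑ i ∈ s, w i * (X i ω - trunc M (X i ω))| + |T ω - μM| + |μM - μ| := by
            rw [hdecomp]
            exact (abs_add_le _ _).trans (add_le_add_left (abs_add_le _ _) _)
        _ ≤ g ω + |T ω - μM| + ε / 3 := add_le_add (add_le_add habs1 le_rfl) hclose
    linarith
  calc ℙ {ω | ε ≤ |(∑ i ∈ s, w i * X i ω) - μ|}
      ≤ ℙ ({ω | ε / 3 ≤ g ω} ∪ {ω | ε / 3 ≤ |T ω - μM|}) := measure_mono hsub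
    _ ≤ ℙ {ω | ε / 3 ≤ g ω} + ℙ {ω | ε / 3 ≤ |T ω - μM|} := measure_union_le _ _
    _ ≤ _ := add_le_add hmark hcheb

lemma abs_sub_trunc_le (M t : ℝ) : |t - trunc M t| ≤ |t| := by
  unfold trunc; split_ifs with h <;> simp

lemma abs_trunc_le_abs (M t : ℝ) : |trunc M t| ≤ |t| := by
  unfold trunc; split_ifs with h <;> simp

theorem cesaro_field_wlln_of_mean
    {Ω : Type*} [MeasureSpace Ω] [IsProbabilityMeasure (ℙ : Measure Ω)]
    (α β μ : ℝ) (hα0 : 0 < α) (hαβ : α ≤ β) (hβ1 : β ≤ 1)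
    (X : ℕ × ℕ → Ω → ℝ) (X0 : Ω → ℝ)
    (hmeas : ∀ kl, Measurable (X kl)) (hmeas0 : Measurable X0)
    (hindep : iIndepFun X ℙ)
    (hident : ∀ kl, IdentDistrib (X kl) X0 ℙ ℙ)
    (hweak : Tendsto (fun n : ℕ => (n : ℝ) * (ℙ {ω | (n : ℝ) < |X0 ω|}).toReal)
      atTop (𝓝 0))
    (hint : Integrable X0 ℙ) (hmean : ∫ ω, X0 ω ∂ℙ = μ) :
    TendstoInMeasure ℙ
      (fun mn : ℕ × ℕ => fun ω =>
        (cesaroA α mn.1 * cesaroA β mn.2)⁻¹ *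
          ∑ k ∈ Finset.range (mn.1 + 1), ∑ l ∈ Finset.range (mn.2 + 1),
            cesaroA (α - 1) (mn.1 - k) * cesaroA (β - 1) (mn.2 - l) * X (k, l) ω)
      atTop (fun _ => μ) := by
  classical
  have hα1 : α ≤ 1 := hαβ.trans hβ1
  have hβ0 : 0 < β := lt_of_lt_of_le hα0 hαβ
  have hAd : ∀ m, 0 < cesaroA α m := cesaroA_pos (by linarith)
  have hBd : ∀ n, 0 < cesaroA β n := cesaroA_pos (by linarith)
  have hαm1 : (-1:ℝ) < α - 1 := by linarith
  have hβm1 : (-1:ℝ) < β - 1 := by linarith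
  -- the truncation error tends to zero
  have hτ0 : Tendsto (fun N : ℕ => ∫ ω, |X0 ω - trunc (N:ℝ) (X0 ω)| ∂ℙ) atTop (𝓝 0) := by
    have h := MeasureTheory.tendsto_integral_of_dominated_convergence (μ := ℙ)
      (F := fun N : ℕ => fun ω => |X0 ω - trunc (N:ℝ) (X0 ω)|) (f := fun _ : Ω => (0:ℝ))
      (bound := fun ω => |X0 ω|)
      (fun N => ((hmeas0.sub ((trunc_measurable _).comp hmeas0)).abs).aestronglyMeasurable)
      hint.abs
      (fun N => Filter.Eventually.of_forall fun ω => by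
        rw [Real.norm_eq_abs, abs_abs]
        exact abs_sub_trunc_le _ _)
      (Filter.Eventually.of_forall fun ω => by
        have hev : ∀ᶠ N : ℕ in atTop, |X0 ω - trunc (N:ℝ) (X0 ω)| = 0 := by
          filter_upwards [eventually_ge_atTop ⌈|X0 ω|⌉₊] with N hN
          have hle : |X0 ω| ≤ (N:ℝ) := (Nat.le_ceil _).trans (by exact_mod_cast hN)
          rw [sub_trunc_eq_zero hle, abs_zero]
        exact Tendsto.congr' (hev.mono fun N h => h.symm) tendsto_const_nhds)
    simpa using h
  rw [tendstoInMeasure_iff_dist]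
  intro ε hε
  refine ENNReal.tendsto_nhds_zero.mpr fun δ hδ => ?_
  obtain ⟨d, hd0, hdδ⟩ : ∃ d : ℝ, 0 < d ∧ ENNReal.ofReal d ≤ δ := by
    rcases eq_or_ne δ ⊤ with h | h
    · exact ⟨1, one_pos, by simp [h]⟩
    · exact ⟨δ.toReal, ENNReal.toReal_pos hδ.ne' h, by rw [ENNReal.ofReal_toReal h]⟩
  -- choose the truncation level
  have hbpos : 0 < min (ε / 3) (d * ε / 6) := lt_min (by positivity) (by positivity)
  obtain ⟨M, hMτ, hM1⟩ := ((hτ0.eventually (eventually_le_nhds hbpos)).and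
    (eventually_ge_atTop 1)).exists
  have hMpos : (0:ℝ) < (M:ℝ) := by
    have : (1:ℝ) ≤ (M:ℝ) := by exact_mod_cast hM1
    linarith
  have htruncint : Integrable (fun ω => trunc (M:ℝ) (X0 ω)) ℙ := by
    refine Integrable.mono hint.abs
      (((trunc_measurable _).comp hmeas0).aestronglyMeasurable)
      (Filter.Eventually.of_forall fun ω => ?_)
    rw [Real.norm_eq_abs, Real.norm_eq_abs, abs_abs]
    exact abs_trunc_le_abs _ _
  have hclose : |(∫ ω, trunc (M:ℝ) (X0 ω) ∂ℙ) - μ| ≤ ε / 3 := by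
    have h1 : |(∫ ω, trunc (M:ℝ) (X0 ω) ∂ℙ) - μ| ≤
        ∫ ω, |X0 ω - trunc (M:ℝ) (X0 ω)| ∂ℙ := by
      rw [← hmean, ← integral_sub htruncint hint]
      calc |∫ ω, (trunc (M:ℝ) (X0 ω) - X0 ω) ∂ℙ|
          ≤ ∫ ω, |trunc (M:ℝ) (X0 ω) - X0 ω| ∂ℙ := by
            simpa [Real.norm_eq_abs] using
              norm_integral_le_integral_norm (μ := ℙ)
                (fun ω => trunc (M:ℝ) (X0 ω) - X0 ω)
        _ = ∫ ω, |X0 ω - trunc (M:ℝ) (X0 ω)| ∂ℙ := by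
            congr 1
            funext ω
            exact abs_sub_comm _ _
    exact h1.trans (hMτ.trans (min_le_left _ _))
  -- the normalizing constants tend to infinity
  have hAB : Tendsto (fun mn : ℕ × ℕ => cesaroA α mn.1 * cesaroA β mn.2) atTop atTop := by
    rw [← Filter.prod_atTop_atTop_eq]
    exact Filter.Tendsto.atTop_mul_atTop₀
      ((cesaroA_tendsto_atTop hα0).comp Filter.tendsto_fst)
      ((cesaroA_tendsto_atTop hβ0).comp Filter.tendsto_snd)
  have hinv : Tendsto (fun mn : ℕ × ℕ => (cesaroA α mn.1 * cesaroA β mn.2)⁻¹)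
      atTop (𝓝 0) := tendsto_inv_atTop_zero.comp hAB
  have hcb : 0 < d * ε ^ 2 / (18 * (M:ℝ) ^ 2) := by positivity
  filter_upwards [hinv.eventually (eventually_le_nhds hcb)] with mn hcsm
  set m := mn.1 with hm
  set n := mn.2 with hn
  set s : Finset (ℕ × ℕ) := Finset.range (m + 1) ×ˢ Finset.range (n + 1) with hs
  set w : ℕ × ℕ → ℝ := fun i =>
    (cesaroA α m * cesaroA β n)⁻¹ *
      (cesaroA (α - 1) (m - i.1) * cesaroA (β - 1) (n - i.2)) with hwdef
  have hABpos : 0 < cesaroA α m * cesaroA β n := mul_pos (hAd m) (hBd n)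
  have hsum : ∀ x : Ω, (cesaroA α m * cesaroA β n)⁻¹ *
      ∑ k ∈ Finset.range (m + 1), ∑ l ∈ Finset.range (n + 1),
        cesaroA (α - 1) (m - k) * cesaroA (β - 1) (n - l) * X (k, l) x
      = ∑ i ∈ s, w i * X i x := by
    intro x
    rw [hs, Finset.sum_product, Finset.mul_sum]
    refine Finset.sum_congr rfl fun k _ => ?_
    rw [Finset.mul_sum]
    refine Finset.sum_congr rfl fun l _ => ?_
    simp only [hwdef]
    ring
  have hw0' : ∀ i ∈ s, 0 ≤ w i := fun i _ =>
    le_of_lt (mul_pos (inv_pos.mpr hABpos)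
      (mul_pos (cesaroA_pos hαm1 _) (cesaroA_pos hβm1 _)))
  have hsumα : ∑ k ∈ Finset.range (m + 1), cesaroA (α - 1) (m - k) = cesaroA α m := by
    have hrefl := Finset.sum_range_reflect (fun j => cesaroA (α - 1) j) (m + 1)
    simp only [Nat.add_sub_cancel] at hrefl
    rw [hrefl, cesaroA_sum (by intro h; linarith : α - 1 + 1 ≠ 0),
      show α - 1 + 1 = α from by ring]
  have hsumβ : ∑ l ∈ Finset.range (n + 1), cesaroA (β - 1) (n - l) = cesaroA β n := by
    have hrefl := Finset.sum_range_reflect (fun j => cesaroA (β - 1) j) (n + 1)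
    simp only [Nat.add_sub_cancel] at hrefl
    rw [hrefl, cesaroA_sum (by intro h; linarith : β - 1 + 1 ≠ 0),
      show β - 1 + 1 = β from by ring]
  have hw1' : ∑ i ∈ s, w i = 1 := by
    have hfac : ∑ i ∈ s, w i = (cesaroA α m * cesaroA β n)⁻¹ *
        ((∑ k ∈ Finset.range (m + 1), cesaroA (α - 1) (m - k)) *
          (∑ l ∈ Finset.range (n + 1), cesaroA (β - 1) (n - l))) := by
      rw [hs, Finset.sum_product, Finset.sum_mul_sum, Finset.mul_sum]
      refine Finset.sum_congr rfl fun k _ => ?_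
      rw [Finset.mul_sum]
    rw [hfac, hsumα, hsumβ, inv_mul_cancel₀ (ne_of_gt hABpos)]
  have hc0' : 0 ≤ (cesaroA α m * cesaroA β n)⁻¹ := le_of_lt (inv_pos.mpr hABpos)
  have hwc' : ∀ i ∈ s, w i ≤ (cesaroA α m * cesaroA β n)⁻¹ := by
    intro i _
    have h1 : cesaroA (α - 1) (m - i.1) ≤ 1 := cesaroA_le_one (by linarith) (by linarith) _
    have h2 : cesaroA (β - 1) (n - i.2) ≤ 1 := cesaroA_le_one (by linarith) (by linarith) _
    have h3 : cesaroA (α - 1) (m - i.1) * cesaroA (β - 1) (n - i.2) ≤ 1 :=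
      mul_le_one₀ h1 (le_of_lt (cesaroA_pos hβm1 _)) h2
    calc w i ≤ (cesaroA α m * cesaroA β n)⁻¹ * 1 :=
          mul_le_mul_of_nonneg_left h3 hc0'
      _ = (cesaroA α m * cesaroA β n)⁻¹ := mul_one _
  have key := weighted_bound s w X X0 μ hmeas hmeas0
    (fun i _ j _ hij => hindep.indepFun hij) hident hint hw0' hw1' hc0' hwc'
    hMpos hε hclose
  have hseteq : {x : Ω | ε ≤ dist ((cesaroA α m * cesaroA β n)⁻¹ *
      ∑ k ∈ Finset.range (m + 1), ∑ l ∈ Finset.range (n + 1),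
        cesaroA (α - 1) (m - k) * cesaroA (β - 1) (n - l) * X (k, l) x) μ}
      = {ω : Ω | ε ≤ |(∑ i ∈ s, w i * X i ω) - μ|} := by
    ext x
    simp only [Set.mem_setOf_eq, Real.dist_eq]
    rw [hsum x]
  have e1 : ENNReal.ofReal (3 / ε * ∫ ω, |X0 ω - trunc (M:ℝ) (X0 ω)| ∂ℙ) ≤
      ENNReal.ofReal (d / 2) := by
    apply ENNReal.ofReal_le_ofReal
    have hτle : (∫ ω, |X0 ω - trunc (M:ℝ) (X0 ω)| ∂ℙ) ≤ d * ε / 6 :=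
      hMτ.trans (min_le_right _ _)
    calc 3 / ε * ∫ ω, |X0 ω - trunc (M:ℝ) (X0 ω)| ∂ℙ
        ≤ 3 / ε * (d * ε / 6) := mul_le_mul_of_nonneg_left hτle (by positivity)
      _ = d / 2 := by field_simp; ring
  have e2 : ENNReal.ofReal (9 * (M:ℝ) ^ 2 * (cesaroA α m * cesaroA β n)⁻¹ / ε ^ 2) ≤
      ENNReal.ofReal (d / 2) := by
    apply ENNReal.ofReal_le_ofReal
    calc 9 * (M:ℝ) ^ 2 * (cesaroA α m * cesaroA β n)⁻¹ / ε ^ 2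
        ≤ 9 * (M:ℝ) ^ 2 * (d * ε ^ 2 / (18 * (M:ℝ) ^ 2)) / ε ^ 2 := by gcongr
      _ = d / 2 := by field_simp; ring
  calc ℙ {x | ε ≤ dist ((cesaroA α m * cesaroA β n)⁻¹ *
        ∑ k ∈ Finset.range (m + 1), ∑ l ∈ Finset.range (n + 1),
          cesaroA (α - 1) (m - k) * cesaroA (β - 1) (n - l) * X (k, l) x) μ}
      = ℙ {ω | ε ≤ |(∑ i ∈ s, w i * X i ω) - μ|} := by rw [hseteq]
    _ ≤ ENNReal.ofReal (3 / ε * ∫ ω, |X0 ω - trunc (M:ℝ) (X0 ω)| ∂ℙ) +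
        ENNReal.ofReal (9 * (M:ℝ) ^ 2 * (cesaroA α m * cesaroA β n)⁻¹ / ε ^ 2) := key
    _ ≤ ENNReal.ofReal (d / 2) + ENNReal.ofReal (d / 2) := add_le_add e1 e2
    _ = ENNReal.ofReal d := by
        rw [← ENNReal.ofReal_add (by positivity) (by positivity)]
        norm_num
    _ ≤ δ := hdδ
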